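/- Let s, v₁, …, v_a, t be a shortest s–t path in the exchange graph G(S) for S ∈ I₁ ∩ I₂. Then S + v₁ − v₂ + v₃ − ⋯ − v_{a−1} + v_a ∈ I₁ ∩ I₂; i.e., augmenting along a shortest augmenting path preserves common independence and increases the size by one. -/

import Mathlib

open Classical

noncomputable section

structure FinMatroid (α : Type*) where
  Indep : Finset α → Prop
  empty_indep : Indep ∅
  subset_indep : ∀ ⦃A B : Finset α⦄, Indep A → B ⊆ A → Indep B
  exchange : ∀ ⦃A B : Finset α⦄, Indep A → Indep B → A.card < B.card →
    ∃ b ∈ B \ A, Indep (insert b A)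

variable {α : Type*} [DecidableEq α]

/-- The rank of a set `T`: the maximum cardinality of an independent subset of `T`. -/
def FinMatroid.rank (M : FinMatroid α) (T : Finset α) : ℕ :=
  (T.powerset.filter fun A => M.Indep A).sup Finset.card

/-- Vertices of the exchange graph: a source `src`, a sink `snk`, and the ground elements. -/
inductive EGV (α : Type*) where
  | src : EGV α
  | snk : EGV α
  | el : α → EGV α

/-- Arcs of the exchange graph `G(S)` for `S ∈ I₁ ∩ I₂`. -/
def egAdj (M₁ M₂ : FinMatroid α) (S : Finset α) : EGV α → EGV α → Prop
  | EGV.src, EGV.el b => b ∉ S ∧ M₁.Indep (insert b S)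
  | EGV.el b, EGV.snk => b ∉ S ∧ M₂.Indep (insert b S)
  | EGV.el x, EGV.el y =>
      (x ∈ S ∧ y ∉ S ∧ M₁.Indep (insert y (S.erase x))) ∨
      (x ∉ S ∧ y ∈ S ∧ M₂.Indep (insert x (S.erase y)))
  | _, _ => False

/-- Directed shortest-path distance in the exchange graph (number of arcs), `⊤` if unreachable. -/
def egDist (M₁ M₂ : FinMatroid α) (S : Finset α) (u v : EGV α) : ℕ∞ :=
  sInf {n : ℕ∞ | ∃ l : List (EGV α),
    List.Chain' (egAdj M₁ M₂ S) (u :: (l ++ [v])) ∧ n = (l.length : ℕ∞) + 1}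

/-- Elements at odd positions (1-indexed) of a list: `v₁, v₃, …` — these are the elements
added by an augmentation. -/
def oddElems (l : List α) : Finset α :=
  ((((List.range l.length).zip l).filter fun p => p.1 % 2 == 0).map Prod.snd).toFinset

/-- Elements at even positions (1-indexed) of a list: `v₂, v₄, …` — these are the elements
removed by an augmentation. -/
def evenElems (l : List α) : Finset α :=
  ((((List.range l.length).zip l).filter fun p => p.1 % 2 == 1).map Prod.snd).toFinset

namespace FinMatroid

variable {M : FinMatroid α}

private lemma mem_sdiff_cl {b : α} {A B : Finset α} :
    b ∈ @sdiff (Finset α) (@Finset.instSDiff α fun a b => Classical.propDecidable (a = b)) B A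
      ↔ b ∈ B \ A := by
  constructor <;> intro h <;> (convert h using 3)

/-- Wrapper for the exchange axiom avoiding `Decidable` instance mismatches. -/
lemma exchange'' (M : FinMatroid α) ⦃A B : Finset α⦄ (hA : M.Indep A) (hB : M.Indep B)
    (h : A.card < B.card) : ∃ b ∈ B \ A, M.Indep (insert b A) := by
  obtain ⟨b, hb, hi⟩ := M.exchange hA hB h
  rw [mem_sdiff_cl] at hb
  refine ⟨b, hb, ?_⟩
  convert hi using 3


lemma card_le_rank {J T : Finset α} (hJ : M.Indep J) (hJT : J ⊆ T) :
    J.card ≤ M.rank T :=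
  Finset.le_sup (by simp [Finset.mem_filter, Finset.mem_powerset, hJ, hJT])

lemma rank_mono {T T' : Finset α} (h : T ⊆ T') : M.rank T ≤ M.rank T' :=
  Finset.sup_mono (by
    intro A hA
    simp only [Finset.mem_filter, Finset.mem_powerset] at hA ⊢
    exact ⟨hA.1.trans h, hA.2⟩)

lemma rank_indep {X : Finset α} (hX : M.Indep X) : M.rank X = X.card := by
  refine le_antisymm (Finset.sup_le ?_) (card_le_rank hX subset_rfl)
  intro A hA
  simp only [Finset.mem_filter, Finset.mem_powerset] at hA
  exact Finset.card_le_card hA.1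

lemma exists_basis (T : Finset α) :
    ∃ B ⊆ T, M.Indep B ∧ B.card = M.rank T := by
  obtain ⟨B, hB, hBe⟩ := Finset.exists_mem_eq_sup
    (T.powerset.filter fun A => M.Indep A)
    ⟨∅, by simp [Finset.mem_filter, M.empty_indep]⟩ Finset.card
  simp only [Finset.mem_filter, Finset.mem_powerset] at hB
  exact ⟨B, hB.1, hB.2, hBe.symm⟩

/-- If `B` spans everything in `D`, then rank of `B ∪ D` is `|B|`. -/
lemma rank_union_eq {B D : Finset α} (hB : M.Indep B)
    (hD : ∀ d ∈ D, d ∈ B ∨ ¬ M.Indep (insert d B)) :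
    M.rank (B ∪ D) = B.card := by
  refine le_antisymm (Finset.sup_le ?_) (card_le_rank hB Finset.subset_union_left)
  intro J hJ
  simp only [Finset.mem_filter, Finset.mem_powerset] at hJ
  by_contra hlt
  push_neg at hlt
  obtain ⟨b, hb, hbi⟩ := M.exchange'' hB hJ.2 hlt
  rw [Finset.mem_sdiff] at hb
  rcases Finset.mem_union.mp (hJ.1 hb.1) with h | h
  · exact hb.2 h
  · rcases hD b h with h' | h'
    · exact hb.2 h'
    · exact h' hbi

/-- ML1: adding an element dependent on a basis of `T` doesn't raise the rank. -/
lemma rank_insert_eq {B T : Finset α} (e : α) (hBT : B ⊆ T) (hB : M.Indep B)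
    (hBr : B.card = M.rank T) (he : ¬ M.Indep (insert e B)) :
    M.rank (insert e T) = M.rank T := by
  refine le_antisymm (Finset.sup_le ?_) (rank_mono (Finset.subset_insert _ _))
  intro J hJ
  simp only [Finset.mem_filter, Finset.mem_powerset] at hJ
  rw [← hBr]
  by_contra hlt
  push_neg at hlt
  obtain ⟨b, hb, hbi⟩ := M.exchange'' hB hJ.2 hlt
  rw [Finset.mem_sdiff] at hb
  have hbe : b ≠ e := by
    rintro rfl; exact he hbi
  have hbT : b ∈ T := by
    rcases Finset.mem_insert.mp (hJ.1 hb.1) with h | h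
    · exact absurd h hbe
    · exact h
  have : (insert b B).card ≤ M.rank T :=
    card_le_rank hbi (Finset.insert_subset hbT hBT)
  rw [Finset.card_insert_of_notMem hb.2, hBr] at this
  omega

/-- Extend an independent subset of `T` to a basis of `T`. -/
lemma exists_basis_superset {A T : Finset α} (hA : M.Indep A) (hAT : A ⊆ T) :
    ∃ B, A ⊆ B ∧ B ⊆ T ∧ M.Indep B ∧ B.card = M.rank T := by
  obtain ⟨B₀, hB₀T, hB₀, hB₀c⟩ := exists_basis (M := M) T
  have hle : A.card ≤ M.rank T := card_le_rank hA hAT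
  obtain ⟨n, hn⟩ : ∃ n, M.rank T - A.card = n := ⟨_, rfl⟩
  induction n generalizing A with
  | zero =>
      exact ⟨A, subset_rfl, hAT, hA, by omega⟩
  | succ n ih =>
      have hlt : A.card < B₀.card := by omega
      obtain ⟨b, hb, hbi⟩ := M.exchange'' hA hB₀ hlt
      rw [Finset.mem_sdiff] at hb
      have hsub : insert b A ⊆ T := Finset.insert_subset (hB₀T hb.1) hAT
      have hcard : (insert b A).card = A.card + 1 := Finset.card_insert_of_notMem hb.2
      obtain ⟨B, h1, h2, h3, h4⟩ := ih hbi hsub (by omega) (by omega)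
      exact ⟨B, (Finset.subset_insert _ _).trans h1, h2, h3, h4⟩

/-- The central span-transitivity contradiction. -/
lemma contra {X D : Finset α} {y : α} (hX : M.Indep X) (hyX : y ∉ X) (hyD : y ∉ D)
    (hins : M.Indep (insert y X))
    (hD : ∀ d ∈ D, d ∈ X ∨ ¬ M.Indep (insert d X))
    (hspan : M.rank (insert y D) = M.rank D) : False := by
  have hXD : M.rank (X ∪ D) = X.card := rank_union_eq hX hD
  obtain ⟨B₂, hB₂D, hB₂, hB₂c⟩ := exists_basis (M := M) D
  have hyB₂ : ¬ M.Indep (insert y B₂) := by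
    intro h
    have : (insert y B₂).card ≤ M.rank (insert y D) :=
      card_le_rank h (Finset.insert_subset_insert _ hB₂D)
    rw [Finset.card_insert_of_notMem (fun hy => hyD (hB₂D hy)), hspan, ← hB₂c] at this
    omega
  obtain ⟨B₃, hB₂₃, hB₃sub, hB₃, hB₃c⟩ :=
    exists_basis_superset hB₂ (hB₂D.trans Finset.subset_union_right)
  have hyB₃ : ¬ M.Indep (insert y B₃) := fun h =>
    hyB₂ (M.subset_indep h (Finset.insert_subset_insert _ hB₂₃))
  have hr : M.rank (insert y (X ∪ D)) = M.rank (X ∪ D) :=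
    rank_insert_eq y hB₃sub hB₃ (by rw [hB₃c]) hyB₃
  have : (insert y X).card ≤ M.rank (insert y (X ∪ D)) :=
    card_le_rank hins (Finset.insert_subset_insert _ Finset.subset_union_left)
  rw [Finset.card_insert_of_notMem hyX, hr, hXD] at this
  omega

end FinMatroid
/-- The key augmentation lemma for a single matroid: given a "triangular" system of
exchanges with no shortcuts, the swapped set is independent. -/
lemma key (M : FinMatroid α) {S : Finset α} (hS : M.Indep S) (k : ℕ) (y x : ℕ → α)
    (hyS : ∀ i, i ≤ k → y i ∉ S)
    (h0 : M.Indep (insert (y 0) S))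
    (hx : ∀ i, 1 ≤ i → i ≤ k → M.Indep (insert (y i) (S.erase (x i))))
    (t0 : ∀ j, 1 ≤ j → j ≤ k → ¬ M.Indep (insert (y j) S))
    (tij : ∀ i j, 1 ≤ i → i < j → j ≤ k → ¬ M.Indep (insert (y j) (S.erase (x i)))) :
    M.Indep ((S \ Finset.image x (Finset.Icc 1 k)) ∪ Finset.image y (Finset.Iic k)) := by
  by_contra hJ
  set J := (S \ Finset.image x (Finset.Icc 1 k)) ∪ Finset.image y (Finset.Iic k) with hJdef
  -- minimal (by cardinality) dependent subset of J
  have hne : (J.powerset.filter fun C => ¬ M.Indep C).Nonempty :=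
    ⟨J, by simp [Finset.mem_filter, hJ]⟩
  obtain ⟨C, hCmem, hCmin⟩ := Finset.exists_min_image _ Finset.card hne
  simp only [Finset.mem_filter, Finset.mem_powerset] at hCmem
  obtain ⟨hCJ, hCdep⟩ := hCmem
  -- C contains some y i
  have hex : ∃ i, i ≤ k ∧ y i ∈ C := by
    by_contra h
    push_neg at h
    have hCS : C ⊆ S := by
      intro c hc
      rcases Finset.mem_union.mp (hCJ hc) with h' | h'
      · exact (Finset.mem_sdiff.mp h').1
      · obtain ⟨i, hi, hyi⟩ := Finset.mem_image.mp h'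
        exact absurd (hyi ▸ hc) (h i (Finset.mem_Iic.mp hi))
    exact hCdep (M.subset_indep hS hCS)
  set t := Nat.find hex with htdef
  obtain ⟨htk, hytC⟩ := Nat.find_spec hex
  set X := if t = 0 then S else S.erase (x t) with hXdef
  have hXS : X ⊆ S := by
    rw [hXdef]; split_ifs
    · exact subset_rfl
    · exact Finset.erase_subset _ _
  have hXind : M.Indep X := M.subset_indep hS hXS
  have hyXind : M.Indep (insert (y t) X) := by
    rw [hXdef]; split_ifs with h
    · rw [h]; exact h0
    · exact hx t (by omega) htk
  have hytX : y t ∉ X := fun h => hyS t htk (hXS h)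
  set D := C.erase (y t) with hDdef
  have hDC : D ⊆ C := Finset.erase_subset _ _
  have hDcard : D.card < C.card := Finset.card_erase_lt_of_mem hytC
  have hDind : M.Indep D := by
    by_contra hDdep
    have := hCmin D (by
      simp only [Finset.mem_filter, Finset.mem_powerset]
      exact ⟨hDC.trans hCJ, hDdep⟩)
    omega
  have hspan : M.rank (insert (y t) D) = M.rank D := by
    rw [Finset.insert_erase hytC, FinMatroid.rank_indep hDind]
    refine le_antisymm (Finset.sup_le ?_) (FinMatroid.card_le_rank hDind hDC)
    intro J' hJ'
    simp only [Finset.mem_filter, Finset.mem_powerset] at hJ'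
    have hss : J' ⊂ C := lt_of_le_of_ne hJ'.1 (fun h => hCdep (h ▸ hJ'.2))
    have h1 : J'.card < C.card := Finset.card_lt_card hss
    have h2 : D.card = C.card - 1 := Finset.card_erase_of_mem hytC
    omega
  have hDspan : ∀ d ∈ D, d ∈ X ∨ ¬ M.Indep (insert d X) := by
    intro d hd
    have hdC : d ∈ C := hDC hd
    have hdyt : d ≠ y t := Finset.ne_of_mem_erase hd
    rcases Finset.mem_union.mp (hCJ hdC) with h' | h'
    · left
      rw [Finset.mem_sdiff] at h'
      rw [hXdef]; split_ifs with h
      · exact h'.1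
      · refine Finset.mem_erase.mpr ⟨?_, h'.1⟩
        intro hdx
        exact h'.2 (Finset.mem_image.mpr ⟨t, Finset.mem_Icc.mpr ⟨by omega, htk⟩, hdx.symm⟩)
    · right
      obtain ⟨i, hik, hyi⟩ := Finset.mem_image.mp h'
      rw [Finset.mem_Iic] at hik
      have hti : t ≤ i := Nat.find_min' hex ⟨hik, hyi ▸ hdC⟩
      have hti' : t < i := lt_of_le_of_ne hti (fun h => hdyt (h ▸ hyi).symm)
      rw [← hyi]
      rw [hXdef]; split_ifs with h
      · exact t0 i (by omega) hik
      · exact tij t i (by omega) hti' hik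
  exact FinMatroid.contra hXind hytX (Finset.notMem_erase _ _) hyXind hDspan hspan
section PathFacts

variable {M₁ M₂ : FinMatroid α} {S : Finset α} {l : List α} {d : α}

private lemma length_pos_of_chain
    (hchain : List.Chain' (egAdj M₁ M₂ S) (EGV.src :: (l.map EGV.el ++ [EGV.snk]))) :
    0 < l.length := by
  cases l with
  | nil => simp [List.Chain', List.isChain_cons_cons, egAdj] at hchain
  | cons a t => simp

private lemma arc_src
    (hchain : List.Chain' (egAdj M₁ M₂ S) (EGV.src :: (l.map EGV.el ++ [EGV.snk])))
    (h : 0 < l.length) :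
    egAdj M₁ M₂ S EGV.src (EGV.el (l.getD 0 d)) := by
  have hc : egAdj M₁ M₂ S ((EGV.src :: (l.map EGV.el ++ [EGV.snk])).get ⟨0, by simp⟩) ((EGV.src :: (l.map EGV.el ++ [EGV.snk])).get ⟨0+1, by simp⟩) :=
    List.isChain_iff_getElem.mp hchain 0 (by simp)
  have h1 : (EGV.src :: (l.map EGV.el ++ [EGV.snk])).get ⟨0+1, by simp⟩ =
      EGV.el (l.getD 0 d) := by
    rw [List.get_eq_getElem, List.getD_eq_getElem _ _ h]
    simp [List.getElem_append, h]
  rw [h1] at hc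
  exact hc

private lemma arc_mid
    (hchain : List.Chain' (egAdj M₁ M₂ S) (EGV.src :: (l.map EGV.el ++ [EGV.snk])))
    (i : ℕ) (h : i + 1 < l.length) :
    egAdj M₁ M₂ S (EGV.el (l.getD i d)) (EGV.el (l.getD (i+1) d)) := by
  have hc : egAdj M₁ M₂ S ((EGV.src :: (l.map EGV.el ++ [EGV.snk])).get ⟨i+1, by simp; omega⟩) ((EGV.src :: (l.map EGV.el ++ [EGV.snk])).get ⟨i+1+1, by simp; omega⟩) :=
    List.isChain_iff_getElem.mp hchain (i+1) (by simp; omega)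
  have h1 : (EGV.src :: (l.map EGV.el ++ [EGV.snk])).get ⟨i+1, by simp; omega⟩ =
      EGV.el (l.getD i d) := by
    rw [List.get_eq_getElem, List.getD_eq_getElem _ _ (by omega : i < l.length)]
    simp [List.getElem_append, show i < l.length by omega]
  have h2 : (EGV.src :: (l.map EGV.el ++ [EGV.snk])).get ⟨i+1+1, by simp; omega⟩ =
      EGV.el (l.getD (i+1) d) := by
    rw [List.get_eq_getElem, List.getD_eq_getElem _ _ h]
    simp [List.getElem_append, h]
  rw [h1, h2] at hc
  exact hc

private lemma arc_snk
    (hchain : List.Chain' (egAdj M₁ M₂ S) (EGV.src :: (l.map EGV.el ++ [EGV.snk])))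
    (h : 0 < l.length) :
    egAdj M₁ M₂ S (EGV.el (l.getD (l.length - 1) d)) EGV.snk := by
  obtain ⟨m, hm⟩ : ∃ m, l.length = m + 1 := ⟨l.length - 1, by omega⟩
  have hc : egAdj M₁ M₂ S ((EGV.src :: (l.map EGV.el ++ [EGV.snk])).get ⟨m+1, by simp; omega⟩) ((EGV.src :: (l.map EGV.el ++ [EGV.snk])).get ⟨m+1+1, by simp; omega⟩) :=
    List.isChain_iff_getElem.mp hchain (m+1) (by simp; omega)
  have h1 : (EGV.src :: (l.map EGV.el ++ [EGV.snk])).get ⟨m+1, by simp; omega⟩ =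
      EGV.el (l.getD m d) := by
    rw [List.get_eq_getElem, List.getD_eq_getElem _ _ (by omega : m < l.length)]
    simp [List.getElem_append, show m < l.length by omega]
  have h2 : (EGV.src :: (l.map EGV.el ++ [EGV.snk])).get ⟨m+1+1, by simp; omega⟩ =
      EGV.snk := by
    rw [List.get_eq_getElem]
    have : m + 1 + 1 = (l.map EGV.el ++ [EGV.snk]).length := by simp [hm]
    simp [List.getElem_append, hm]
  rw [h1, h2] at hc
  simpa [hm] using hc

private lemma parity
    (hchain : List.Chain' (egAdj M₁ M₂ S) (EGV.src :: (l.map EGV.el ++ [EGV.snk]))) :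
    ∀ i, i < l.length → (l.getD i d ∈ S ↔ i % 2 = 1) := by
  intro i
  induction i with
  | zero =>
      intro h
      have := arc_src (d := d) hchain h
      simp only [egAdj] at this
      exact iff_of_false this.1 (by omega)
  | succ i ih =>
      intro h
      have hi := ih (by omega)
      have harc := arc_mid (d := d) hchain i h
      simp only [egAdj] at harc
      rcases harc with ⟨h1, h2, _⟩ | ⟨h1, h2, _⟩
      · have h3 : i % 2 = 1 := hi.mp h1
        exact iff_of_false h2 (by omega)
      · have h3 : ¬ (i % 2 = 1) := fun hh => h1 (hi.mpr hh)
        exact iff_of_true h2 (by omega)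

private lemma length_odd
    (hchain : List.Chain' (egAdj M₁ M₂ S) (EGV.src :: (l.map EGV.el ++ [EGV.snk]))) :
    l.length % 2 = 1 := by
  have h := length_pos_of_chain hchain
  have hne : l ≠ [] := List.length_pos_iff.mp h
  have harc := arc_snk (d := l.head hne) hchain h
  simp only [egAdj] at harc
  have hp := parity (d := l.head hne) hchain (l.length - 1) (by omega)
  have h2 : ¬ ((l.length - 1) % 2 = 1) := fun hh => harc.1 (hp.mpr hh)
  omega

end PathFacts
section Splice

variable {M₁ M₂ : FinMatroid α} {S : Finset α} {l : List α} {d : α}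

private lemma getLast?_take (d : α) (a : ℕ) (ha : a ≠ 0) (han : a ≤ l.length) :
    (EGV.src :: (l.take a).map EGV.el).getLast? = some (EGV.el (l.getD (a-1) d)) := by
  rw [List.getLast?_eq_getElem?]
  have h1 : (EGV.src :: (l.take a).map EGV.el).length = a + 1 := by simp; omega
  rw [h1]
  simp only [Nat.add_sub_cancel]
  rw [List.getElem?_cons, if_neg ha, List.getElem?_map, List.getElem?_take,
    if_pos (by omega : a - 1 < a), List.getElem?_eq_getElem (by omega : a - 1 < l.length),
    List.getD_eq_getElem _ _ (by omega : a - 1 < l.length)]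
  rfl

private lemma head?_drop' (d : α) (b : ℕ) (hb : b < l.length) :
    ((l.drop b).map EGV.el ++ [EGV.snk]).head? = some (EGV.el (l.getD b d)) := by
  rw [List.head?_append, List.head?_map, List.head?_drop,
    List.getElem?_eq_getElem hb, List.getD_eq_getElem _ _ hb]
  rfl

private lemma no_short
    (hshort : egDist M₁ M₂ S EGV.src EGV.snk = ((l.length : ℕ) : ℕ∞) + 1)
    (l' : List α)
    (hc : List.Chain' (egAdj M₁ M₂ S) (EGV.src :: (l'.map EGV.el ++ [EGV.snk]))) :
    l.length ≤ l'.length := by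
  have hmem : (((l'.map EGV.el).length : ℕ∞) + 1) ∈ {n : ℕ∞ | ∃ l'' : List (EGV α),
      List.Chain' (egAdj M₁ M₂ S) (EGV.src :: (l'' ++ [EGV.snk])) ∧
        n = (l''.length : ℕ∞) + 1} := ⟨l'.map EGV.el, hc, rfl⟩
  have hle := sInf_le hmem
  rw [egDist] at hshort
  rw [hshort] at hle
  simp only [List.length_map] at hle
  have : ((l.length + 1 : ℕ) : ℕ∞) ≤ ((l'.length + 1 : ℕ) : ℕ∞) := by
    push_cast
    exact hle
  exact_mod_cast Nat.succ_le_succ_iff.mp (by exact_mod_cast this)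

private lemma splice
    (hchain : List.Chain' (egAdj M₁ M₂ S) (EGV.src :: (l.map EGV.el ++ [EGV.snk])))
    (hshort : egDist M₁ M₂ S EGV.src EGV.snk = ((l.length : ℕ) : ℕ∞) + 1)
    (a b : ℕ) (hab : a ≤ b) (hbn : b ≤ l.length)
    (harc : egAdj M₁ M₂ S
      (if a = 0 then EGV.src else EGV.el (l.getD (a-1) d))
      (if b = l.length then EGV.snk else EGV.el (l.getD b d))) :
    l.length ≤ a + (l.length - b) := by
  have han : a ≤ l.length := le_trans hab hbn
  have hchain' : List.Chain' (egAdj M₁ M₂ S)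
      (EGV.src :: ((l.take a ++ l.drop b).map EGV.el ++ [EGV.snk])) := by
    have hsplit : EGV.src :: ((l.take a ++ l.drop b).map EGV.el ++ [EGV.snk]) =
        (EGV.src :: (l.take a).map EGV.el) ++ ((l.drop b).map EGV.el ++ [EGV.snk]) := by
      simp [List.map_append]
    rw [hsplit]
    show List.IsChain _ _
    rw [List.isChain_append]
    refine ⟨?_, ?_, ?_⟩
    · apply hchain.infix
      apply List.IsPrefix.isInfix
      exact ⟨(l.drop a).map EGV.el ++ [EGV.snk], by
        simp [← List.append_assoc, ← List.map_append]⟩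
    · apply hchain.infix
      apply List.IsSuffix.isInfix
      exact ⟨EGV.src :: (l.take b).map EGV.el, by
        simp [← List.append_assoc, ← List.map_append]⟩
    · intro u hu v hv
      have hu' : u = if a = 0 then EGV.src else EGV.el (l.getD (a-1) d) := by
        by_cases ha : a = 0
        · rw [if_pos ha]
          simp [ha] at hu
          exact hu.symm
        · rw [if_neg ha]
          rw [getLast?_take d a ha han] at hu
          exact (by simpa using hu : _ = u).symm
      have hv' : v = if b = l.length then EGV.snk else EGV.el (l.getD b d) := by
        by_cases hb : b = l.length
        · rw [if_pos hb]
          simp [hb] at hv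
          exact hv.symm
        · rw [if_neg hb]
          rw [head?_drop' d b (by omega)] at hv
          exact (by simpa using hv : _ = v).symm
      rw [hu', hv']
      exact harc
  have := no_short hshort _ hchain'
  simp only [List.length_append, List.length_take, List.length_drop] at this
  omega

private lemma noshort_src
    (hchain : List.Chain' (egAdj M₁ M₂ S) (EGV.src :: (l.map EGV.el ++ [EGV.snk])))
    (hshort : egDist M₁ M₂ S EGV.src EGV.snk = ((l.length : ℕ) : ℕ∞) + 1)
    (q : ℕ) (h1 : 1 ≤ q) (h2 : q < l.length) :
    ¬ egAdj M₁ M₂ S EGV.src (EGV.el (l.getD q d)) := by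
  intro harc
  have := splice (d := d) hchain hshort 0 q (by omega) (by omega)
    (by rw [if_pos rfl, if_neg (by omega)]; exact harc)
  omega

private lemma noshort_snk
    (hchain : List.Chain' (egAdj M₁ M₂ S) (EGV.src :: (l.map EGV.el ++ [EGV.snk])))
    (hshort : egDist M₁ M₂ S EGV.src EGV.snk = ((l.length : ℕ) : ℕ∞) + 1)
    (p : ℕ) (h2 : p + 1 < l.length) :
    ¬ egAdj M₁ M₂ S (EGV.el (l.getD p d)) EGV.snk := by
  intro harc
  have := splice (d := d) hchain hshort (p+1) l.length (by omega) (by omega)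
    (by rw [if_neg (by omega), if_pos rfl]; simpa using harc)
  omega

private lemma noshort_mid
    (hchain : List.Chain' (egAdj M₁ M₂ S) (EGV.src :: (l.map EGV.el ++ [EGV.snk])))
    (hshort : egDist M₁ M₂ S EGV.src EGV.snk = ((l.length : ℕ) : ℕ∞) + 1)
    (p q : ℕ) (h1 : p + 1 < q) (h2 : q < l.length) :
    ¬ egAdj M₁ M₂ S (EGV.el (l.getD p d)) (EGV.el (l.getD q d)) := by
  intro harc
  have := splice (d := d) hchain hshort (p+1) q (by omega) (by omega)
    (by rw [if_neg (by omega), if_neg (by omega)]; simpa using harc)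
  omega

private lemma path_nodup
    (hchain : List.Chain' (egAdj M₁ M₂ S) (EGV.src :: (l.map EGV.el ++ [EGV.snk])))
    (hshort : egDist M₁ M₂ S EGV.src EGV.snk = ((l.length : ℕ) : ℕ∞) + 1) :
    ∀ i j, i < j → j < l.length → l.getD i d ≠ l.getD j d := by
  intro i j hij hj heq
  have hkey : l.length ≤ i + (l.length - j) := by
    apply splice (d := d) hchain hshort i j (by omega) (by omega)
    by_cases hi : i = 0
    · rw [if_pos hi, if_neg (by omega)]
      rw [← heq]
      subst hi
      exact arc_src hchain (by omega)
    · rw [if_neg hi, if_neg (by omega), ← heq]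
      have := arc_mid (d := d) hchain (i-1) (by omega)
      have hii : i - 1 + 1 = i := by omega
      rw [hii] at this
      exact this
  omega

end Splice
private lemma mem_zip_range' {l : List α} {i : ℕ} {b : α} :
    (i, b) ∈ (List.range l.length).zip l ↔ l[i]? = some b := by
  rw [List.mem_iff_getElem?]
  constructor
  · rintro ⟨n, hn⟩
    rw [List.getElem?_zip_eq_some] at hn
    obtain ⟨h1, h2⟩ := hn
    have hn : n < l.length := by
      by_contra hc
      rw [List.getElem?_eq_none (by simpa using hc)] at h1
      simp at h1
    rw [List.getElem?_range hn] at h1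
    cases h1
    exact h2
  · intro h
    refine ⟨i, ?_⟩
    rw [List.getElem?_zip_eq_some]
    refine ⟨?_, h⟩
    have : i < l.length := (List.getElem?_eq_some_iff.mp h).1
    exact List.getElem?_range this
private lemma mem_oddElems {l : List α} {a : α} :
    a ∈ oddElems l ↔ ∃ i, i % 2 = 0 ∧ l[i]? = some a := by
  unfold oddElems
  rw [List.mem_toFinset, List.mem_map]
  constructor
  · rintro ⟨⟨i, b⟩, hp, rfl⟩
    rw [List.mem_filter] at hp
    exact ⟨i, by simpa using hp.2, mem_zip_range'.mp hp.1⟩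
  · rintro ⟨i, hi, hsome⟩
    exact ⟨(i, a), List.mem_filter.mpr ⟨mem_zip_range'.mpr hsome, by simpa⟩, rfl⟩

private lemma mem_evenElems {l : List α} {a : α} :
    a ∈ evenElems l ↔ ∃ i, i % 2 = 1 ∧ l[i]? = some a := by
  unfold evenElems
  rw [List.mem_toFinset, List.mem_map]
  constructor
  · rintro ⟨⟨i, b⟩, hp, rfl⟩
    rw [List.mem_filter] at hp
    exact ⟨i, by simpa using hp.2, mem_zip_range'.mp hp.1⟩
  · rintro ⟨i, hi, hsome⟩
    exact ⟨(i, a), List.mem_filter.mpr ⟨mem_zip_range'.mpr hsome, by simpa⟩, rfl⟩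
/-- Augmenting along a shortest augmenting path `s, v₁, …, v_a, t` in `G(S)` preserves common
independence and increases the size by one: `S + v₁ − v₂ + ⋯ + v_a ∈ I₁ ∩ I₂`. -/
theorem shortest_augmenting_path (M₁ M₂ : FinMatroid α) (S : Finset α) (l : List α)
    (hS₁ : M₁.Indep S) (hS₂ : M₂.Indep S)
    (hchain : List.Chain' (egAdj M₁ M₂ S) (EGV.src :: (l.map EGV.el ++ [EGV.snk])))
    (hshort : egDist M₁ M₂ S EGV.src EGV.snk = ((l.length : ℕ) : ℕ∞) + 1) :
    M₁.Indep ((S \ evenElems l) ∪ oddElems l) ∧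
    M₂.Indep ((S \ evenElems l) ∪ oddElems l) ∧
    ((S \ evenElems l) ∪ oddElems l).card = S.card + 1 := by
  have hpos : 0 < l.length := length_pos_of_chain hchain
  have hnil : l ≠ [] := List.length_pos_iff.mp hpos
  set d := l.head hnil with hd
  have hodd : l.length % 2 = 1 := length_odd hchain
  obtain ⟨k, hk⟩ : ∃ k, l.length = 2*k+1 := ⟨(l.length-1)/2, by omega⟩
  have hpar := parity (d := d) hchain
  have hnd := path_nodup (d := d) hchain hshort
  -- image descriptions of oddElems and evenElems
  have hoddsE : oddElems l = Finset.image (fun i => l.getD (2*i) d) (Finset.Iic k) := by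
    ext a
    rw [mem_oddElems, Finset.mem_image]
    constructor
    · rintro ⟨i, hmod, hsome⟩
      obtain ⟨hlt, hval⟩ := List.getElem?_eq_some_iff.mp hsome
      refine ⟨i/2, Finset.mem_Iic.mpr (by omega), ?_⟩
      rw [show 2*(i/2) = i by omega, List.getD_eq_getElem _ _ hlt, hval]
    · rintro ⟨j, hj, rfl⟩
      rw [Finset.mem_Iic] at hj
      have hlt : 2*j < l.length := by omega
      exact ⟨2*j, by omega,
        by rw [List.getElem?_eq_getElem hlt, List.getD_eq_getElem _ _ hlt]⟩
  have hevensE : evenElems l =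
      Finset.image (fun i => l.getD (2*i-1) d) (Finset.Icc 1 k) := by
    ext a
    rw [mem_evenElems, Finset.mem_image]
    constructor
    · rintro ⟨i, hmod, hsome⟩
      obtain ⟨hlt, hval⟩ := List.getElem?_eq_some_iff.mp hsome
      refine ⟨(i+1)/2, Finset.mem_Icc.mpr ⟨by omega, by omega⟩, ?_⟩
      rw [show 2*((i+1)/2)-1 = i by omega, List.getD_eq_getElem _ _ hlt, hval]
    · rintro ⟨j, hj, rfl⟩
      rw [Finset.mem_Icc] at hj
      have hlt : 2*j-1 < l.length := by omega
      exact ⟨2*j-1, by omega,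
        by rw [List.getElem?_eq_getElem hlt, List.getD_eq_getElem _ _ hlt]⟩
  -- membership facts
  have hyS : ∀ i, i ≤ k → l.getD (2*i) d ∉ S := fun i hi hmem => by
    have := (hpar (2*i) (by omega)).mp hmem
    omega
  have hxS : ∀ i, 1 ≤ i → i ≤ k → l.getD (2*i-1) d ∈ S := fun i h1 h2 =>
    (hpar (2*i-1) (by omega)).mpr (by omega)
  -- hypotheses of `key` for M₁
  have harc0 := arc_src (d := d) hchain hpos
  simp only [egAdj] at harc0
  have h0₁ : M₁.Indep (insert (l.getD (2*0) d) S) := harc0.2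
  have hx₁ : ∀ i, 1 ≤ i → i ≤ k →
      M₁.Indep (insert (l.getD (2*i) d) (S.erase (l.getD (2*i-1) d))) := by
    intro i h1 h2
    have harc := arc_mid (d := d) hchain (2*i-1) (by omega)
    rw [show 2*i-1+1 = 2*i by omega] at harc
    simp only [egAdj] at harc
    rcases harc with ⟨_, _, h⟩ | ⟨h, _, _⟩
    · exact h
    · exact absurd (hxS i h1 h2) h
  have t0₁ : ∀ j, 1 ≤ j → j ≤ k → ¬ M₁.Indep (insert (l.getD (2*j) d) S) := by
    intro j h1 h2 hind
    exact noshort_src (d := d) hchain hshort (2*j) (by omega) (by omega)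
      (by simp only [egAdj]; exact ⟨hyS j h2, hind⟩)
  have tij₁ : ∀ i j, 1 ≤ i → i < j → j ≤ k →
      ¬ M₁.Indep (insert (l.getD (2*j) d) (S.erase (l.getD (2*i-1) d))) := by
    intro i j h1 h2 h3 hind
    exact noshort_mid (d := d) hchain hshort (2*i-1) (2*j) (by omega) (by omega)
      (by simp only [egAdj]; exact Or.inl ⟨hxS i h1 (by omega), hyS j h3, hind⟩)
  have hI₁ := key M₁ hS₁ k (fun i => l.getD (2*i) d) (fun i => l.getD (2*i-1) d)
    hyS h0₁ hx₁ t0₁ tij₁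
  -- hypotheses of `key` for M₂
  have harcn := arc_snk (d := d) hchain hpos
  simp only [egAdj] at harcn
  have hy'S : ∀ i, i ≤ k → l.getD (2*(k-i)) d ∉ S := fun i hi => hyS (k-i) (by omega)
  have h0₂ : M₂.Indep (insert (l.getD (2*(k-0)) d) S) := by
    rw [show 2*(k-0) = l.length - 1 by omega]
    exact harcn.2
  have hx₂ : ∀ i, 1 ≤ i → i ≤ k →
      M₂.Indep (insert (l.getD (2*(k-i)) d) (S.erase (l.getD (2*(k-i)+1) d))) := by
    intro i h1 h2
    have harc := arc_mid (d := d) hchain (2*(k-i)) (by omega)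
    simp only [egAdj] at harc
    rcases harc with ⟨h, _, _⟩ | ⟨_, _, h⟩
    · exact absurd h (hy'S i h2)
    · exact h
  have t0₂ : ∀ j, 1 ≤ j → j ≤ k → ¬ M₂.Indep (insert (l.getD (2*(k-j)) d) S) := by
    intro j h1 h2 hind
    exact noshort_snk (d := d) hchain hshort (2*(k-j)) (by omega)
      (by simp only [egAdj]; exact ⟨hy'S j h2, hind⟩)
  have tij₂ : ∀ i j, 1 ≤ i → i < j → j ≤ k →
      ¬ M₂.Indep (insert (l.getD (2*(k-j)) d) (S.erase (l.getD (2*(k-i)+1) d))) := by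
    intro i j h1 h2 h3 hind
    have hmemx : l.getD (2*(k-i)+1) d ∈ S :=
      (hpar (2*(k-i)+1) (by omega)).mpr (by omega)
    exact noshort_mid (d := d) hchain hshort (2*(k-j)) (2*(k-i)+1) (by omega) (by omega)
      (by simp only [egAdj]; exact Or.inr ⟨hy'S j h3, hmemx, hind⟩)
  have hI₂ := key M₂ hS₂ k (fun i => l.getD (2*(k-i)) d) (fun i => l.getD (2*(k-i)+1) d)
    hy'S h0₂ hx₂ t0₂ tij₂
  -- rewriting the images appearing in hI₂
  have him1 : Finset.image (fun i => l.getD (2*(k-i)) d) (Finset.Iic k)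
      = Finset.image (fun i => l.getD (2*i) d) (Finset.Iic k) := by
    ext a
    simp only [Finset.mem_image, Finset.mem_Iic]
    constructor
    · rintro ⟨i, hi, rfl⟩
      exact ⟨k-i, by omega, rfl⟩
    · rintro ⟨i, hi, rfl⟩
      exact ⟨k-i, by omega, by rw [show k-(k-i) = i by omega]⟩
  have him2 : Finset.image (fun i => l.getD (2*(k-i)+1) d) (Finset.Icc 1 k)
      = Finset.image (fun i => l.getD (2*i-1) d) (Finset.Icc 1 k) := by
    ext a
    simp only [Finset.mem_image, Finset.mem_Icc]
    constructor
    · rintro ⟨i, hi, rfl⟩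
      exact ⟨k-i+1, ⟨by omega, by omega⟩, by rw [show 2*(k-i+1)-1 = 2*(k-i)+1 by omega]⟩
    · rintro ⟨i, hi, rfl⟩
      exact ⟨k-i+1, ⟨by omega, by omega⟩, by rw [show 2*(k-(k-i+1))+1 = 2*i-1 by omega]⟩
  rw [him2, him1] at hI₂
  -- cardinalities
  have hyinj : Set.InjOn (fun i => l.getD (2*i) d) (Finset.Iic k) := by
    intro a ha b hb heq
    simp only [Finset.coe_Iic, Set.mem_Iic] at ha hb
    by_contra hne
    rcases lt_trichotomy a b with h | h | h
    · exact hnd (2*a) (2*b) (by omega) (by omega) heq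
    · exact hne h
    · exact hnd (2*b) (2*a) (by omega) (by omega) heq.symm
  have hxinj : Set.InjOn (fun i => l.getD (2*i-1) d) (Finset.Icc 1 k) := by
    intro a ha b hb heq
    simp only [Finset.coe_Icc, Set.mem_Icc] at ha hb
    by_contra hne
    rcases lt_trichotomy a b with h | h | h
    · exact hnd (2*a-1) (2*b-1) (by omega) (by omega) heq
    · exact hne h
    · exact hnd (2*b-1) (2*a-1) (by omega) (by omega) heq.symm
  have hodds_card : (oddElems l).card = k + 1 := by
    rw [hoddsE, Finset.card_image_of_injOn hyinj, Nat.card_Iic]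
  have hevens_card : (evenElems l).card = k := by
    rw [hevensE, Finset.card_image_of_injOn hxinj, Nat.card_Icc]
    omega
  have hevsub : evenElems l ⊆ S := by
    rw [hevensE]
    intro a ha
    obtain ⟨i, hi, rfl⟩ := Finset.mem_image.mp ha
    rw [Finset.mem_Icc] at hi
    exact hxS i hi.1 hi.2
  have hodd_nS : ∀ a ∈ oddElems l, a ∉ S := by
    rw [hoddsE]
    intro a ha
    obtain ⟨i, hi, rfl⟩ := Finset.mem_image.mp ha
    exact hyS i (Finset.mem_Iic.mp hi)
  have hdisj : Disjoint (S \ evenElems l) (oddElems l) :=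
    Finset.disjoint_left.mpr fun a ha hb => hodd_nS a hb (Finset.mem_sdiff.mp ha).1
  have hcard : ((S \ evenElems l) ∪ oddElems l).card = S.card + 1 := by
    rw [Finset.card_union_of_disjoint hdisj, Finset.card_sdiff_of_subset hevsub, hodds_card,
      hevens_card]
    have : k ≤ S.card := hevens_card ▸ Finset.card_le_card hevsub
    omega
  refine ⟨?_, ?_, hcard⟩
  · rw [hevensE, hoddsE]
    exact hI₁
  · rw [hevensE, hoddsE]
    exact hI₂
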